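/- For every α ∈ ℂ the quantum dimension of the Verma module vanishes: qdim(V_α) = 0. For every l ∈ ℤ and 0 ≤ n ≤ r−2, qdim(S_n^{lr}) = (−1)^{n+l+lr} [n+1], which is nonzero. -/

import Mathlib

noncomputable section

open scoped TensorProduct

namespace Unrolled

/-- `q^z = exp(π √-1 z / r)`. -/
def qc (r : ℕ) (z : ℂ) : ℂ := Complex.exp (Real.pi * Complex.I * z / r)

/-- `{z} = q^z - q^{-z}`. -/
def qbrk (r : ℕ) (z : ℂ) : ℂ := qc r z - qc r (-z)

/-- `[z] = {z}/{1}`. -/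
def qint (r : ℕ) (z : ℂ) : ℂ := qbrk r z / qbrk r 1

/-- `{n}! = ∏_{i=1}^n {i}`. -/
def qbrkFact (r n : ℕ) : ℂ := ∏ i ∈ Finset.range n, qbrk r ((i : ℂ) + 1)

/-- `[n]! = ∏_{i=1}^n [i]`. -/
def qintFact (r n : ℕ) : ℂ := ∏ i ∈ Finset.range n, qint r ((i : ℂ) + 1)

/-- The data of five operators `K, K⁻¹, H, E, F` on a complex vector space. -/
structure Ops (V : Type) [AddCommGroup V] [Module ℂ V] where
  K : Module.End ℂ V
  Kinv : Module.End ℂ V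
  H : Module.End ℂ V
  E : Module.End ℂ V
  F : Module.End ℂ V

/-- A module over the restricted unrolled quantum group `Ū = Ū_q^H(sl₂(ℂ))`:
five operators satisfying the defining relations of `Ū`. -/
structure Rep (r : ℕ) (V : Type) [AddCommGroup V] [Module ℂ V] extends Ops V where
  rel_KKinv : K * Kinv = 1
  rel_KinvK : Kinv * K = 1
  rel_HK : H * K = K * H
  rel_HE : H * E - E * H = (2 : ℂ) • E
  rel_HF : H * F - F * H = (-2 : ℂ) • F
  rel_KE : K * E = qc r 2 • (E * K)
  rel_KF : K * F = qc r (-2) • (F * K)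
  rel_EF : E * F - F * E = (qbrk r 1)⁻¹ • (K - Kinv)
  rel_Er : E ^ r = 0
  rel_Fr : F ^ r = 0

variable {V W U : Type} [AddCommGroup V] [Module ℂ V] [AddCommGroup W] [Module ℂ W]
  [AddCommGroup U] [Module ℂ U]

/-- A `Ū`-submodule: a subspace invariant under the five operators. -/
def Ops.Invariant (A : Ops V) (p : Submodule ℂ V) : Prop :=
  (∀ v ∈ p, A.K v ∈ p) ∧ (∀ v ∈ p, A.Kinv v ∈ p) ∧ (∀ v ∈ p, A.H v ∈ p) ∧
    (∀ v ∈ p, A.E v ∈ p) ∧ (∀ v ∈ p, A.F v ∈ p)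

/-- A simple `Ū`-module: nonzero, with no nonzero proper invariant subspace. -/
def Ops.IsSimple (A : Ops V) : Prop :=
  (∃ v : V, v ≠ 0) ∧ ∀ p : Submodule ℂ V, A.Invariant p → p = ⊥ ∨ p = ⊤

/-- A weight module: finite dimensional, a direct sum of `H`-eigenspaces, on which `K`
acts by `q^μ` on the `H`-eigenspace of eigenvalue `μ`. -/
structure IsWeight (r : ℕ) {V : Type} [AddCommGroup V] [Module ℂ V] (A : Ops V) : Prop where
  finDim : FiniteDimensional ℂ V
  sup_eigenspaces : (⨆ μ : ℂ, Module.End.eigenspace A.H μ) = ⊤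
  K_apply : ∀ (μ : ℂ), ∀ v ∈ Module.End.eigenspace A.H μ, A.K v = qc r μ • v

/-- A `Ū`-linear map. -/
def IsEquivariant (A : Ops V) (B : Ops W) (f : V →ₗ[ℂ] W) : Prop :=
  (∀ v, f (A.K v) = B.K (f v)) ∧ (∀ v, f (A.Kinv v) = B.Kinv (f v)) ∧
    (∀ v, f (A.H v) = B.H (f v)) ∧ (∀ v, f (A.E v) = B.E (f v)) ∧
    (∀ v, f (A.F v) = B.F (f v))

/-- Isomorphism of `Ū`-modules. -/
def OpsIso (A : Ops V) (B : Ops W) : Prop :=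
  ∃ e : V ≃ₗ[ℂ] W, IsEquivariant A B (e : V →ₗ[ℂ] W)

/-- The weight `α + r - 1 - 2i` of the basis vector `v_i` of the Verma module `V_α`. -/
def wt (r : ℕ) (α : ℂ) (i : ℕ) : ℂ := α + r - 1 - 2 * i

/-- The coefficient `{i}{i-α}/{1}²` occurring in `E v_i`. -/
def cE (r : ℕ) (α : ℂ) (i : ℕ) : ℂ := qbrk r i * qbrk r ((i : ℂ) - α) / qbrk r 1 ^ 2

/-- The Verma module `V_α` of highest weight `α + r - 1`, realized on `Fin r → ℂ`
with basis `v_0, …, v_{r-1}`. -/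
def vermaOps (r : ℕ) (α : ℂ) : Ops (Fin r → ℂ) where
  K := (Matrix.diagonal fun i : Fin r => qc r (wt r α (i : ℕ))).mulVecLin
  Kinv := (Matrix.diagonal fun i : Fin r => qc r (-wt r α (i : ℕ))).mulVecLin
  H := (Matrix.diagonal fun i : Fin r => wt r α (i : ℕ)).mulVecLin
  E := (Matrix.of fun i j : Fin r =>
    if (j : ℕ) = (i : ℕ) + 1 then cE r α (j : ℕ) else 0).mulVecLin
  F := (Matrix.of fun i j : Fin r =>
    if (i : ℕ) = (j : ℕ) + 1 then (1 : ℂ) else 0).mulVecLin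

/-- `α_{l,n} = (l-1)r + n + 1`, so that `S_n^{lr}` is a quotient of `V_{α_{l,n}}`. -/
def aln (r : ℕ) (l : ℤ) (n : ℕ) : ℂ := ((l : ℂ) - 1) * r + n + 1

/-- The simple module `S_n^{lr}` of highest weight `lr + n` and dimension `n+1`,
realized on `Fin (n+1) → ℂ`. -/
def smodOps (r : ℕ) (l : ℤ) (n : ℕ) : Ops (Fin (n + 1) → ℂ) where
  K := (Matrix.diagonal fun i : Fin (n + 1) => qc r (wt r (aln r l n) (i : ℕ))).mulVecLin
  Kinv := (Matrix.diagonal fun i : Fin (n + 1) => qc r (-wt r (aln r l n) (i : ℕ))).mulVecLin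
  H := (Matrix.diagonal fun i : Fin (n + 1) => wt r (aln r l n) (i : ℕ)).mulVecLin
  E := (Matrix.of fun i j : Fin (n + 1) =>
    if (j : ℕ) = (i : ℕ) + 1 then cE r (aln r l n) (j : ℕ) else 0).mulVecLin
  F := (Matrix.of fun i j : Fin (n + 1) =>
    if (i : ℕ) = (j : ℕ) + 1 then (1 : ℂ) else 0).mulVecLin

/-- `α ∈ (ℂ∖ℤ) ∪ rℤ`. -/
def goodα (r : ℕ) (α : ℂ) : Prop := (¬∃ n : ℤ, α = (n : ℂ)) ∨ ∃ m : ℤ, α = (r : ℂ) * m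

/-- The coevaluation element `Σ_i v_i ⊗ v_i^∨ ∈ V ⊗ V^∨` for `V = Fin m → ℂ` with its
standard basis. -/
def coevEl (m : ℕ) : (Fin m → ℂ) ⊗[ℂ] Module.Dual ℂ (Fin m → ℂ) :=
  ∑ i : Fin m, Pi.single i (1 : ℂ) ⊗ₜ[ℂ] (LinearMap.proj i : (Fin m → ℂ) →ₗ[ℂ] ℂ)

/-- The coevaluation `coev : ℂ → V ⊗ V^∨`, `1 ↦ Σ_i v_i ⊗ v_i^∨`. -/
def coevMap (m : ℕ) : ℂ →ₗ[ℂ] (Fin m → ℂ) ⊗[ℂ] Module.Dual ℂ (Fin m → ℂ) :=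
  LinearMap.toSpanSingleton ℂ _ (coevEl m)

/-- The evaluation `ev̂ : V ⊗ V^∨ → ℂ`, `v ⊗ f ↦ f (g v)`, where `g` should be taken
to be the action of `K^{1-r}`. -/
def evHatMap (m : ℕ) (g : Module.End ℂ (Fin m → ℂ)) :
    (Fin m → ℂ) ⊗[ℂ] Module.Dual ℂ (Fin m → ℂ) →ₗ[ℂ] ℂ :=
  TensorProduct.lift ((LinearMap.applyₗ :
    (Fin m → ℂ) →ₗ[ℂ] (Module.Dual ℂ (Fin m → ℂ) →ₗ[ℂ] ℂ)) ∘ₗ g)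


section Aux

lemma qc_add (r : ℕ) (z w : ℂ) : qc r (z + w) = qc r z * qc r w := by
  rw [qc, qc, qc, ← Complex.exp_add]; congr 1; ring

lemma qc_pow (r : ℕ) (z : ℂ) (k : ℕ) : qc r z ^ k = qc r ((k : ℂ) * z) := by
  rw [qc, qc, ← Complex.exp_nat_mul]; congr 1; ring

lemma qc_ne_zero (r : ℕ) (z : ℂ) : qc r z ≠ 0 := Complex.exp_ne_zero _

lemma qc_neg (r : ℕ) (z : ℂ) : qc r (-z) = (qc r z)⁻¹ := by
  refine eq_inv_of_mul_eq_one_left ?_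
  rw [← qc_add]; simp [qc]

lemma qc_two_mul_eq_one_iff (r : ℕ) (hr : 0 < r) (m : ℤ) :
    qc r (2 * (m : ℂ)) = 1 ↔ (r : ℤ) ∣ m := by
  have hr0 : (r : ℂ) ≠ 0 := Nat.cast_ne_zero.mpr hr.ne'
  have hpi : (Real.pi : ℂ) ≠ 0 := Complex.ofReal_ne_zero.mpr Real.pi_ne_zero
  rw [qc, Complex.exp_eq_one_iff]
  constructor
  · rintro ⟨k, hk⟩
    refine ⟨k, ?_⟩
    have h2 : (m : ℂ) = (r : ℂ) * k := by
      field_simp at hk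
      have h3 : (2 * Real.pi * Complex.I) * m = (2 * Real.pi * Complex.I) * ((r : ℂ) * k) := by
        linear_combination (2 * Real.pi * Complex.I) * hk
      exact mul_left_cancel₀ (by simp [hpi, Complex.I_ne_zero]) h3
    exact_mod_cast h2
  · rintro ⟨k, rfl⟩
    refine ⟨k, ?_⟩
    push_cast
    field_simp

lemma qbrk_nat_ne_zero (r m : ℕ) (h1 : 0 < m) (h2 : m < r) : qbrk r (m : ℂ) ≠ 0 := by
  have key : qc r (2 * ((m : ℤ) : ℂ)) ≠ 1 := by
    simp only [ne_eq, qc_two_mul_eq_one_iff r (h1.trans h2) m]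
    intro hdvd
    have := Int.le_of_dvd (by exact_mod_cast h1) hdvd
    omega
  rw [qbrk, sub_ne_zero, qc_neg]
  intro hcontra
  apply key
  have : qc r (m : ℂ) * qc r (m : ℂ) = 1 := by
    nth_rewrite 2 [hcontra]
    exact mul_inv_cancel₀ (qc_ne_zero r _)
  rw [← qc_add] at this
  convert this using 2
  push_cast; ring

lemma diag_pow_single (m k : ℕ) (d : Fin m → ℂ) (i : Fin m) :
    (((Matrix.diagonal d).mulVecLin : Module.End ℂ (Fin m → ℂ)) ^ k) (Pi.single i 1)
      = d i ^ k • (Pi.single i 1 : Fin m → ℂ) := by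
  induction k with
  | zero => simp
  | succ k ih =>
    rw [pow_succ', Module.End.mul_apply]
    have h1 : (Matrix.diagonal d).mulVecLin (Pi.single i (1 : ℂ))
        = d i • (Pi.single i 1 : Fin m → ℂ) := by
      rw [Matrix.mulVecLin_apply, Matrix.diagonal_mulVec_single]
      ext j
      by_cases h : j = i <;> simp [h, Pi.single_apply]
    rw [ih, map_smul, h1, smul_smul, pow_succ', mul_comm]

lemma qdim_diag (m k : ℕ) (d : Fin m → ℂ) :
    (evHatMap m ((Matrix.diagonal d).mulVecLin ^ k) ∘ₗ coevMap m) 1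
      = ∑ i : Fin m, d i ^ k := by
  rw [LinearMap.comp_apply, coevMap, LinearMap.toSpanSingleton_apply, one_smul, coevEl,
    map_sum]
  refine Finset.sum_congr rfl fun i _ => ?_
  rw [evHatMap, TensorProduct.lift.tmul]
  simp only [LinearMap.comp_apply]
  rw [diag_pow_single]
  simp [LinearMap.applyₗ_apply_apply]

end Aux

/-- `qdim(V_α) = 0` for every `α ∈ ℂ`, while
`qdim(S_n^{lr}) = (-1)^{n+l+lr} [n+1] ≠ 0`. -/
theorem stmt14 (r : ℕ) (hr : 2 ≤ r) :
    (∀ α : ℂ,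
      (evHatMap r ((vermaOps r α).Kinv ^ (r - 1)) ∘ₗ coevMap r) 1 = 0) ∧
    ∀ (l : ℤ) (n : ℕ), n ≤ r - 2 →
      (evHatMap (n + 1) ((smodOps r l n).Kinv ^ (r - 1)) ∘ₗ coevMap (n + 1)) 1 =
          (-1 : ℂ) ^ ((n : ℤ) + l + l * r) * qint r ((n : ℂ) + 1) ∧
        (-1 : ℂ) ^ ((n : ℤ) + l + l * r) * qint r ((n : ℂ) + 1) ≠ 0 := by
  have hr1 : (1 : ℕ) ≤ r := by omega
  have hr0 : (r : ℂ) ≠ 0 := Nat.cast_ne_zero.mpr (by omega)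
  constructor
  · intro α
    have hK : (vermaOps r α).Kinv
        = (Matrix.diagonal fun i : Fin r => qc r (-wt r α (i : ℕ))).mulVecLin := rfl
    rw [hK, qdim_diag]
    set ζ := qc r (2 * ((r : ℂ) - 1)) with hζ
    have hζne1 : ζ ≠ 1 := by
      have hcast : ζ = qc r (2 * ((((r : ℤ) - 1) : ℤ) : ℂ)) := by rw [hζ]; push_cast; ring_nf
      rw [hcast, ne_eq, qc_two_mul_eq_one_iff r (by omega)]
      intro hdvd
      have := Int.le_of_dvd (by omega) hdvd
      omega
    have hζr : ζ ^ r = 1 := by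
      rw [hζ, qc_pow]
      have hcast : (r : ℂ) * (2 * ((r : ℂ) - 1)) = 2 * ((((r : ℤ) * ((r : ℤ) - 1)) : ℤ) : ℂ) := by
        push_cast; ring
      rw [hcast, qc_two_mul_eq_one_iff r (by omega)]
      exact ⟨(r : ℤ) - 1, rfl⟩
    have hterm : ∀ i : ℕ,
        qc r (-wt r α i) ^ (r - 1)
          = qc r (((r - 1 : ℕ) : ℂ) * -(α + r - 1)) * ζ ^ i := by
      intro i
      rw [qc_pow, hζ, qc_pow, ← qc_add]
      congr 1
      rw [wt]
      push_cast [Nat.cast_sub hr1]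
      ring
    rw [Fin.sum_univ_eq_sum_range (fun i => qc r (-wt r α i) ^ (r - 1)) r]
    simp_rw [hterm]
    rw [← Finset.mul_sum, geom_sum_eq hζne1, hζr, sub_self, zero_div, mul_zero]
  · intro l n hn
    have hnr : n + 1 < r := by omega
    set a := qc r 1 with ha
    have ha0 : a ≠ 0 := qc_ne_zero r 1
    have ha2 : a ^ 2 = qc r 2 := by
      rw [ha, qc_pow]; norm_num
    have ha2ne1 : a ^ 2 ≠ 1 := by
      rw [ha2]
      have hcast : qc r 2 = qc r (2 * (((1 : ℤ) : ℤ) : ℂ)) := by norm_num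
      rw [hcast, ne_eq, qc_two_mul_eq_one_iff r (by omega)]
      intro hdvd
      have := Int.le_of_dvd (by omega) hdvd
      omega
    set s := (-1 : ℂ) ^ ((n : ℤ) + l + l * r) with hs
    have hsexp : s = Complex.exp (Real.pi * Complex.I * (((n : ℤ) + l + l * r : ℤ) : ℂ)) := by
      rw [hs, ← Complex.exp_pi_mul_I, ← Complex.exp_int_mul]
      congr 1
      ring
    have hK : (smodOps r l n).Kinv
        = (Matrix.diagonal fun i : Fin (n + 1) =>
            qc r (-wt r (aln r l n) (i : ℕ))).mulVecLin := rfl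
    have hy : qc r (-2) = (a ^ 2)⁻¹ := by rw [ha2, ← qc_neg]
    have hyne1 : qc r (-2) ≠ 1 := by
      rw [hy, ne_eq, inv_eq_one]
      exact ha2ne1
    have han : qc r (n : ℂ) = a ^ n := by rw [ha, qc_pow]; norm_num
    have hterm : ∀ i : ℕ,
        qc r (-wt r (aln r l n) i) ^ (r - 1)
          = s * (qc r (n : ℂ) * qc r (-2) ^ i) := by
      intro i
      rw [qc_pow, hsexp, qc_pow]
      rw [qc, qc, qc, ← Complex.exp_add, ← Complex.exp_add,
        Complex.exp_eq_exp_iff_exists_int]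
      refine ⟨(i : ℤ) - n - l * r, ?_⟩
      rw [wt, aln]
      push_cast [Nat.cast_sub hr1]
      field_simp
      ring
    constructor
    · rw [hK, qdim_diag]
      rw [Fin.sum_univ_eq_sum_range
        (fun i => qc r (-wt r (aln r l n) i) ^ (r - 1)) (n + 1)]
      simp_rw [hterm]
      rw [← Finset.mul_sum, ← Finset.mul_sum, geom_sum_eq hyne1]
      congr 1
      rw [qint, qbrk, qbrk, han, hy]
      have h1 : qc r (-((n : ℂ) + 1)) = (qc r ((n : ℂ) + 1))⁻¹ := qc_neg r _
      have h2 : qc r (-(1 : ℂ)) = a⁻¹ := by rw [qc_neg, ha]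
      have h3 : qc r ((n : ℂ) + 1) = a ^ (n + 1) := by
        rw [ha, qc_pow]; push_cast; ring_nf
      rw [h1, h2, h3]
      have hane : a - a⁻¹ ≠ 0 := by
        rw [sub_ne_zero]
        intro hcontra
        apply ha2ne1
        rw [pow_two]
        nth_rewrite 2 [hcontra]
        exact mul_inv_cancel₀ ha0
      have hyne : (a ^ 2)⁻¹ - 1 ≠ 0 := by
        rw [sub_ne_zero, ne_eq, inv_eq_one]
        exact ha2ne1
      rw [← ha, mul_div_assoc', div_eq_div_iff hyne hane, inv_pow]
      field_simp
      ring
    · refine mul_ne_zero (zpow_ne_zero _ (by norm_num)) ?_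
      rw [qint]
      refine div_ne_zero ?_ ?_
      · have := qbrk_nat_ne_zero r (n + 1) (by omega) hnr
        convert this using 2
        push_cast
        ring
      · have := qbrk_nat_ne_zero r 1 one_pos (by omega)
        convert this using 2
        norm_num


end Unrolled
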